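/- arXiv:0711.0902 — 2 statements merged into one kernel-verified Lean document; each statement's English description precedes it below -/
import Mathlib

section
/- Let L = {(p₁,q₁),…,(p_n,q_n)} be a lattice diagram with its cells listed in increasing pseudo-lexicographic order, and let k ≥ 1. Then e_k(∂x₁,…,∂x_n) Δ_L(X;Y) = Σ_{1≤i₁<i₂<⋯<i_k≤n} ε(i₁,…,i_k) Δ_{e_k(i₁,…,i_k;L)}(X;Y), where e_k(i₁,…,i_k;L) is obtained from L by replacing the biexponents (p_{i₁},q_{i₁}),…,(p_{i_k},q_{i_k}) with (p_{i₁}−1,q_{i₁}),…,(p_{i_k}−1,q_{i_k}), and where each coefficient ε(i₁,…,i_k) is a nonnegative integer which is zero whenever the resulting list does not consist of n distinct cells in ℕ×ℕ (i.e. whenever some p_{i_j} = 0 or two resulting biexponents coincide). -/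
open MvPolynomial

noncomputable section

/-- The monomial differential operator `∂^m` applied to a polynomial `Q`:
if `m = (m_v)_v`, this is `∏_v (∂/∂x_v)^{m_v}` applied to `Q`. -/
def monDiff {σ : Type*} [DecidableEq σ] (m : σ →₀ ℕ) (Q : MvPolynomial σ ℚ) :
    MvPolynomial σ ℚ :=
  ∑ a ∈ Q.support,
    MvPolynomial.monomial (a - m) (Q.coeff a * ∏ v ∈ m.support, ((a v).descFactorial (m v) : ℚ))

/-- The differential operator `P(∂)` applied to `Q`. -/
def applyDiff {σ : Type*} [DecidableEq σ] (P Q : MvPolynomial σ ℚ) : MvPolynomial σ ℚ :=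
  ∑ m ∈ P.support, P.coeff m • monDiff m Q

/-- The linear span of `Q` and all its partial derivatives (of all orders),
i.e. the space `L_∂[Q]`. -/
def derivSpan {σ : Type*} [DecidableEq σ] (Q : MvPolynomial σ ℚ) :
    Submodule ℚ (MvPolynomial σ ℚ) :=
  Submodule.span ℚ {R | ∃ m : σ →₀ ℕ, R = monDiff m Q}

/-- Strict pseudo-lexicographic order: compare second coordinates first. -/
def plexLT {α : Type*} [LinearOrder α] (a b : α × α) : Prop :=
  a.2 < b.2 ∨ (a.2 = b.2 ∧ a.1 < b.1)

/-- Pseudo-lexicographic order on `ℕ × ℕ`. -/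
def plexLE (a b : ℕ × ℕ) : Prop :=
  a.2 < b.2 ∨ (a.2 = b.2 ∧ a.1 ≤ b.1)

instance : DecidableRel plexLE := fun a b => by unfold plexLE; exact inferInstance
instance : IsTrans (ℕ × ℕ) plexLE := ⟨by intro a b c hab hbc; unfold plexLE at *; omega⟩
instance : IsAntisymm (ℕ × ℕ) plexLE := ⟨by
  intro a b hab hba
  unfold plexLE at hab hba
  have h1 : a.1 = b.1 := by omega
  have h2 : a.2 = b.2 := by omega
  exact Prod.ext h1 h2⟩
instance : IsTotal (ℕ × ℕ) plexLE := ⟨by intro a b; unfold plexLE; omega⟩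

/-- Lexicographic order on `ℕ × ℕ`: compare first coordinates first. -/
def lexLE (a b : ℕ × ℕ) : Prop :=
  a.1 < b.1 ∨ (a.1 = b.1 ∧ a.2 ≤ b.2)

/-- Strict lexicographic order on `ℕ × ℕ`. -/
def lexLT (a b : ℕ × ℕ) : Prop :=
  a.1 < b.1 ∨ (a.1 = b.1 ∧ a.2 < b.2)

instance : DecidableRel lexLE := fun a b => by unfold lexLE; exact inferInstance
instance : IsTrans (ℕ × ℕ) lexLE := ⟨by intro a b c hab hbc; unfold lexLE at *; omega⟩
instance : IsAntisymm (ℕ × ℕ) lexLE := ⟨by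
  intro a b hab hba
  unfold lexLE at hab hba
  have h1 : a.1 = b.1 := by omega
  have h2 : a.2 = b.2 := by omega
  exact Prod.ext h1 h2⟩
instance : IsTotal (ℕ × ℕ) lexLE := ⟨by intro a b; unfold lexLE; omega⟩

/-- The lattice determinant of a list of `n` biexponents:
`Δ = det(x_i^{p_j} y_i^{q_j})`, in the ring `ℚ[x_1,…,x_n,y_1,…,y_n]`,
where `Sum.inl i` stands for `x_{i+1}` and `Sum.inr i` for `y_{i+1}`. -/
def deltaOfList (n : ℕ) (L : Fin n → ℕ × ℕ) : MvPolynomial (Fin n ⊕ Fin n) ℚ :=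
  Matrix.det (Matrix.of fun i j : Fin n =>
    X (Sum.inl i) ^ (L j).1 * X (Sum.inr i) ^ (L j).2)

/-- The lattice determinant of a lattice diagram (finite set of cells), the cells
being listed in increasing pseudo-lexicographic order; `0` if the diagram does not
have exactly `n` cells. -/
def deltaOfFinset (n : ℕ) (D : Finset (ℕ × ℕ)) : MvPolynomial (Fin n ⊕ Fin n) ℚ :=
  if h : D.card = n then
    deltaOfList n fun i => (D.sort plexLE).get ⟨i.1, by rw [Finset.length_sort, h]; exact i.2⟩
  else 0

open scoped Classical in
/-- The lattice determinant of a list of integer biexponents: `0` if some coordinate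
is negative (and `0` if two biexponents coincide, since then the determinant has two
equal columns). -/
def deltaOfListZ (n : ℕ) (L : Fin n → ℤ × ℤ) : MvPolynomial (Fin n ⊕ Fin n) ℚ :=
  if ∀ j, 0 ≤ (L j).1 ∧ 0 ≤ (L j).2 then
    deltaOfList n fun j => ((L j).1.toNat, (L j).2.toNat)
  else 0

/-- The Ferrers diagram of a partition with `h` rows and parts `μ 0 ≥ μ 1 ≥ …`:
the set of cells `(r, c)` with `r < h` and `c < μ r`. -/
def ferrers (h : ℕ) (μ : ℕ → ℕ) : Finset (ℕ × ℕ) :=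
  (Finset.range h ×ˢ Finset.range (μ 0)).filter fun rc => rc.2 < μ rc.1

/-- The shadow of the cell `(i, j)` in the diagram `F`. -/
def shadowF (F : Finset (ℕ × ℕ)) (i j : ℕ) : Finset (ℕ × ℕ) :=
  F.filter fun c => i ≤ c.1 ∧ j ≤ c.2

/-- The space `M^k_{i,j}(X,Y)`: the sum of the spaces `M_{μ/S}` over all `k`-element
subsets `S` of the shadow of `(i,j)` in the diagram `F` (of a partition of `n + k`). -/
def Mk (n k : ℕ) (F : Finset (ℕ × ℕ)) (i j : ℕ) :
    Submodule ℚ (MvPolynomial (Fin n ⊕ Fin n) ℚ) :=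
  ⨆ S ∈ Finset.powersetCard k (shadowF F i j), derivSpan (deltaOfFinset n (F \ S))

/-- The submodule of polynomials involving only the `x` variables
(elements of `Y`-degree `0`). -/
def onlyX (n : ℕ) : Submodule ℚ (MvPolynomial (Fin n ⊕ Fin n) ℚ) :=
  Subalgebra.toSubmodule (MvPolynomial.supported ℚ (Set.range Sum.inl))

/-- The space `M^k_{i,j}(X)`: the elements of `M^k_{i,j}(X,Y)` of `Y`-degree 0. -/
def MkX (n k : ℕ) (F : Finset (ℕ × ℕ)) (i j : ℕ) :
    Submodule ℚ (MvPolynomial (Fin n ⊕ Fin n) ℚ) :=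
  Mk n k F i j ⊓ onlyX n

end

/-- The list of biexponents obtained from `L` by replacing, for each `j ∈ S`, the
biexponent `(p_j, q_j)` by `(p_j - 1, q_j)`, and leaving the others unchanged. -/
noncomputable def ekMod (n : ℕ) (L : Fin n → ℕ × ℕ) (S : Finset (Fin n)) : Fin n → ℤ × ℤ :=
  fun j => if j ∈ S then (((L j).1 : ℤ) - 1, ((L j).2 : ℤ))
    else (((L j).1 : ℤ), ((L j).2 : ℤ))

section Aux0

variable {τ : Type*} [DecidableEq τ]

noncomputable def monDiffL (m : τ →₀ ℕ) : MvPolynomial τ ℚ →ₗ[ℚ] MvPolynomial τ ℚ :=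
  (Finsupp.lsum ℚ fun a =>
    (∏ v ∈ m.support, ((a v).descFactorial (m v) : ℚ)) • (MvPolynomial.monomial (a - m)))
    ∘ₗ (AddMonoidAlgebra.coeffLinearEquiv ℚ).toLinearMap

lemma monDiff_eq (m : τ →₀ ℕ) (Q : MvPolynomial τ ℚ) : monDiff m Q = monDiffL m Q := by
  unfold monDiff monDiffL
  erw [LinearMap.comp_apply, Finsupp.lsum_apply, Finsupp.sum]
  refine Finset.sum_congr rfl fun a _ => ?_
  simp [MvPolynomial.coeff, MvPolynomial.smul_monomial, mul_comm]

lemma monDiff_monomial (m b : τ →₀ ℕ) (c : ℚ) :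
    monDiff m (MvPolynomial.monomial b c)
      = MvPolynomial.monomial (b - m) (c * ∏ v ∈ m.support, ((b v).descFactorial (m v) : ℚ)) := by
  rw [monDiff_eq, monDiffL, LinearMap.comp_apply]
  erw [show (AddMonoidAlgebra.coeffLinearEquiv ℚ).toLinearMap (MvPolynomial.monomial b c)
    = Finsupp.single b c from rfl]
  erw [Finsupp.lsum_single]
  simp [MvPolynomial.smul_monomial, mul_comm]

lemma applyDiff_eq_sum (P Q : MvPolynomial τ ℚ) :
    applyDiff P Q = (AddMonoidAlgebra.coeff P).sum fun m c => c • monDiff m Q := by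
  rw [applyDiff, Finsupp.sum]
  rfl

lemma applyDiff_add (P₁ P₂ Q : MvPolynomial τ ℚ) :
    applyDiff (P₁ + P₂) Q = applyDiff P₁ Q + applyDiff P₂ Q := by
  simp only [applyDiff_eq_sum, AddMonoidAlgebra.coeff_add]
  exact Finsupp.sum_add_index' (fun m => zero_smul _ _) (fun m c₁ c₂ => add_smul _ _ _)

lemma applyDiff_zero (Q : MvPolynomial τ ℚ) : applyDiff 0 Q = 0 := by
  simp [applyDiff]

lemma applyDiff_monomial (m : τ →₀ ℕ) (c : ℚ) (Q : MvPolynomial τ ℚ) :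
    applyDiff (MvPolynomial.monomial m c) Q = c • monDiff m Q := by
  rw [applyDiff_eq_sum, ← MvPolynomial.single_eq_monomial, AddMonoidAlgebra.coeff_single]
  exact Finsupp.sum_single_index (zero_smul _ _)

lemma applyDiff_finset_sum {ι : Type*} (s : Finset ι) (f : ι → MvPolynomial τ ℚ)
    (Q : MvPolynomial τ ℚ) :
    applyDiff (∑ i ∈ s, f i) Q = ∑ i ∈ s, applyDiff (f i) Q := by
  induction s using Finset.cons_induction with
  | empty => simp [applyDiff_zero]
  | cons a s ha ih => simp [Finset.sum_cons, applyDiff_add, ih]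

lemma prod_X_eq_monomial {ι : Type*} (s : Finset ι) (f : ι → τ) :
    (∏ i ∈ s, (MvPolynomial.X (f i) : MvPolynomial τ ℚ))
      = MvPolynomial.monomial (∑ i ∈ s, Finsupp.single (f i) 1) 1 := by
  induction s using Finset.cons_induction with
  | empty => simp
  | cons a s ha ih =>
    rw [Finset.prod_cons, Finset.sum_cons, ih, MvPolynomial.monomial_single_add, pow_one]

end Aux0

section Det
variable {n : ℕ}

noncomputable def Ee (L : Fin n → ℕ × ℕ) (σ : Equiv.Perm (Fin n)) : (Fin n ⊕ Fin n) →₀ ℕ :=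
  ∑ i : Fin n,
    (Finsupp.single (Sum.inl (σ i)) (L i).1 + Finsupp.single (Sum.inr (σ i)) (L i).2)

noncomputable def mT (T : Finset (Fin n)) : (Fin n ⊕ Fin n) →₀ ℕ :=
  ∑ i ∈ T, Finsupp.single (Sum.inl i) 1

lemma prod_monomial_one {ι : Type*} (s : Finset ι) (d : ι → ((Fin n ⊕ Fin n) →₀ ℕ)) :
    (∏ i ∈ s, (MvPolynomial.monomial (d i) (1 : ℚ)))
      = MvPolynomial.monomial (∑ i ∈ s, d i) 1 := by
  induction s using Finset.cons_induction with
  | empty => simp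
  | cons a s ha ih =>
    rw [Finset.prod_cons, Finset.sum_cons, ih, MvPolynomial.monomial_mul, one_mul]

lemma deltaOfList_eq_sum (L : Fin n → ℕ × ℕ) :
    deltaOfList n L = ∑ σ : Equiv.Perm (Fin n),
      MvPolynomial.monomial (Ee L σ) (((Equiv.Perm.sign σ : ℤ) : ℚ)) := by
  rw [deltaOfList, Matrix.det_apply]
  refine Finset.sum_congr rfl fun σ _ => ?_
  have h1 : ∀ i : Fin n, (Matrix.of fun i j : Fin n =>
      (X (Sum.inl i) ^ (L j).1 * X (Sum.inr i) ^ (L j).2 : MvPolynomial (Fin n ⊕ Fin n) ℚ)) (σ i) i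
      = MvPolynomial.monomial
          (Finsupp.single (Sum.inl (σ i)) (L i).1 + Finsupp.single (Sum.inr (σ i)) (L i).2) 1 := by
    intro i
    simp [MvPolynomial.X_pow_eq_monomial, MvPolynomial.monomial_mul]
  rw [Finset.prod_congr rfl fun i _ => h1 i, prod_monomial_one]
  rw [Units.smul_def, MvPolynomial.smul_monomial]
  norm_num [Ee]

lemma Ee_apply_inl (L : Fin n → ℕ × ℕ) (σ : Equiv.Perm (Fin n)) (i' : Fin n) :
    Ee L σ (Sum.inl i') = (L (σ⁻¹ i')).1 := by
  rw [Ee, Finset.sum_apply']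
  have : ∀ i : Fin n,
      ((Finsupp.single (Sum.inl (σ i)) (L i).1 + Finsupp.single (Sum.inr (σ i)) (L i).2 :
        (Fin n ⊕ Fin n) →₀ ℕ)) (Sum.inl i')
      = if i = σ⁻¹ i' then (L i).1 else 0 := by
    intro i
    rw [Finsupp.add_apply, Finsupp.single_apply, Finsupp.single_apply]
    have h : ((Sum.inl (σ i) : Fin n ⊕ Fin n) = Sum.inl i') ↔ (i = σ⁻¹ i') := by
      constructor
      · intro h; cases h; simp
      · rintro rfl; simp
    simp only [reduceCtorEq, if_false, add_zero]
    split_ifs with h1 h2 h2 <;> first | rfl | (exact absurd (h.mp h1) h2) | (exact absurd (h.mpr h2) h1)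
  rw [Finset.sum_congr rfl fun i _ => this i, Finset.sum_ite_eq' Finset.univ]
  simp

lemma Ee_apply_inr (L : Fin n → ℕ × ℕ) (σ : Equiv.Perm (Fin n)) (i' : Fin n) :
    Ee L σ (Sum.inr i') = (L (σ⁻¹ i')).2 := by
  rw [Ee, Finset.sum_apply']
  have : ∀ i : Fin n,
      ((Finsupp.single (Sum.inl (σ i)) (L i).1 + Finsupp.single (Sum.inr (σ i)) (L i).2 :
        (Fin n ⊕ Fin n) →₀ ℕ)) (Sum.inr i')
      = if i = σ⁻¹ i' then (L i).2 else 0 := by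
    intro i
    rw [Finsupp.add_apply, Finsupp.single_apply, Finsupp.single_apply]
    have h : ((Sum.inr (σ i) : Fin n ⊕ Fin n) = Sum.inr i') ↔ (i = σ⁻¹ i') := by
      constructor
      · intro h; cases h; simp
      · rintro rfl; simp
    simp only [reduceCtorEq, if_false, zero_add]
    split_ifs with h1 h2 h2 <;> first | rfl | (exact absurd (h.mp h1) h2) | (exact absurd (h.mpr h2) h1)
  rw [Finset.sum_congr rfl fun i _ => this i, Finset.sum_ite_eq' Finset.univ]
  simp

lemma mT_apply_inl (T : Finset (Fin n)) (i' : Fin n) :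
    mT T (Sum.inl i') = if i' ∈ T then 1 else 0 := by
  rw [mT, Finset.sum_apply']
  simp [Finsupp.single_apply, Sum.inl.injEq, eq_comm]

lemma mT_apply_inr (T : Finset (Fin n)) (i' : Fin n) : mT T (Sum.inr i') = 0 := by
  rw [mT, Finset.sum_apply']
  simp [Finsupp.single_apply]

end Det

section Det2
variable {n : ℕ}

lemma prod_desc (L : Fin n → ℕ × ℕ) (σ : Equiv.Perm (Fin n)) (T : Finset (Fin n)) :
    (∏ v ∈ (mT T).support, (((Ee L σ v).descFactorial ((mT T) v) : ℚ)))
      = ∏ i ∈ T, ((L (σ⁻¹ i)).1 : ℚ) := by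
  rw [Finset.prod_subset (Finset.subset_univ ((mT T).support))
    (fun v _ hv => by rw [Finsupp.notMem_support_iff.mp hv]; simp)]
  rw [Fintype.prod_sum_type]
  have h2 : ∀ i : Fin n, ((Ee L σ (Sum.inr i)).descFactorial (mT T (Sum.inr i)) : ℚ) = 1 := by
    intro i; rw [mT_apply_inr]; simp
  rw [Finset.prod_congr rfl fun i _ => h2 i, Finset.prod_const_one, mul_one]
  have h1 : ∀ i : Fin n, ((Ee L σ (Sum.inl i)).descFactorial (mT T (Sum.inl i)) : ℚ)
      = if i ∈ T then ((L (σ⁻¹ i)).1 : ℚ) else 1 := by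
    intro i; rw [mT_apply_inl, Ee_apply_inl]
    split_ifs <;> simp
  rw [Finset.prod_congr rfl fun i _ => h1 i, Finset.prod_ite_mem, Finset.univ_inter]

lemma monDiff_delta (L : Fin n → ℕ × ℕ) (T : Finset (Fin n)) :
    monDiff (mT T) (deltaOfList n L)
      = ∑ σ : Equiv.Perm (Fin n),
          MvPolynomial.monomial (Ee L σ - mT T)
            (((Equiv.Perm.sign σ : ℤ) : ℚ) * ∏ i ∈ T, ((L (σ⁻¹ i)).1 : ℚ)) := by
  rw [deltaOfList_eq_sum, monDiff_eq, map_sum]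
  refine Finset.sum_congr rfl fun σ _ => ?_
  rw [← monDiff_eq, monDiff_monomial, prod_desc]

lemma key (L : Fin n → ℕ × ℕ) (S : Finset (Fin n)) :
    (∑ σ : Equiv.Perm (Fin n),
        MvPolynomial.monomial (Ee L σ - mT (S.image σ))
          (((Equiv.Perm.sign σ : ℤ) : ℚ) * ∏ i ∈ S.image ⇑σ, ((L (σ⁻¹ i)).1 : ℚ)))
      = (∏ j ∈ S, ((L j).1 : ℚ)) •
          deltaOfList n (fun j => ((ekMod n L S j).1.toNat, (ekMod n L S j).2.toNat)) := by
  rw [deltaOfList_eq_sum, Finset.smul_sum]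
  refine Finset.sum_congr rfl fun σ _ => ?_
  have hprod : (∏ i ∈ S.image ⇑σ, ((L (σ⁻¹ i)).1 : ℚ)) = ∏ j ∈ S, ((L j).1 : ℚ) := by
    rw [Finset.prod_image (fun a _ b _ h => σ.injective h)]
    refine Finset.prod_congr rfl fun j _ => ?_
    rw [Equiv.Perm.inv_def, Equiv.symm_apply_apply]
  have hE : Ee L σ - mT (S.image ⇑σ)
      = Ee (fun j => ((ekMod n L S j).1.toNat, (ekMod n L S j).2.toNat)) σ := by
    ext v
    rw [Finsupp.tsub_apply]
    cases v with
    | inl i' =>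
      rw [Ee_apply_inl, Ee_apply_inl, mT_apply_inl]
      have hmem : i' ∈ S.image ⇑σ ↔ σ⁻¹ i' ∈ S := by
        constructor
        · rintro h
          obtain ⟨a, ha, rfl⟩ := Finset.mem_image.mp h
          rwa [Equiv.Perm.inv_def, Equiv.symm_apply_apply]
        · intro h
          exact Finset.mem_image.mpr ⟨σ⁻¹ i', h, by simp⟩
      simp only [hmem, ekMod]
      split_ifs with h <;> simp <;> omega
    | inr i' =>
      rw [Ee_apply_inr, Ee_apply_inr, mT_apply_inr]
      simp only [ekMod]
      split_ifs with h <;> simp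
  rw [hprod, hE, MvPolynomial.smul_monomial, smul_eq_mul, mul_comm]

lemma delta_zero_of_not_inj (L' : Fin n → ℕ × ℕ) (h : ¬ Function.Injective L') :
    deltaOfList n L' = 0 := by
  rw [Function.not_injective_iff] at h
  obtain ⟨a, b, hab, hne⟩ := h
  exact Matrix.det_zero_of_column_eq hne (fun k => by rw [Matrix.of_apply, Matrix.of_apply, hab])

end Det2

/-- Proposition 2: action of the elementary symmetric polynomial `e_k(∂X)` on a
lattice diagram polynomial. -/
theorem statement1 (n k : ℕ) (hk : 1 ≤ k) (L : Fin n → ℕ × ℕ)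
    (hsort : ∀ i j : Fin n, i < j → plexLT (L i) (L j)) :
    ∃ ε : Finset (Fin n) → ℕ,
      applyDiff
          (∑ S ∈ Finset.powersetCard k (Finset.univ : Finset (Fin n)),
            ∏ i ∈ S, X (Sum.inl i))
          (deltaOfList n L)
        = ∑ S ∈ Finset.powersetCard k (Finset.univ : Finset (Fin n)),
            (ε S : ℚ) • deltaOfListZ n (ekMod n L S) ∧
      ∀ S ∈ Finset.powersetCard k (Finset.univ : Finset (Fin n)),
        ((∃ j ∈ S, (L j).1 = 0) ∨ ¬ Function.Injective (ekMod n L S)) → ε S = 0 := by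
  classical
  refine ⟨fun S => if Function.Injective (ekMod n L S) then ∏ j ∈ S, (L j).1 else 0, ?_, ?_⟩
  · rw [applyDiff_finset_sum]
    have h1 : ∀ T ∈ Finset.powersetCard k (Finset.univ : Finset (Fin n)),
        applyDiff (∏ i ∈ T, X (Sum.inl i)) (deltaOfList n L)
          = ∑ σ : Equiv.Perm (Fin n),
              MvPolynomial.monomial (Ee L σ - mT T)
                (((Equiv.Perm.sign σ : ℤ) : ℚ) * ∏ i ∈ T, ((L (σ⁻¹ i)).1 : ℚ)) := by
      intro T _
      rw [prod_X_eq_monomial, applyDiff_monomial, one_smul]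
      exact monDiff_delta L T
    rw [Finset.sum_congr rfl h1, Finset.sum_comm]
    have h2 : ∀ σ : Equiv.Perm (Fin n),
        (∑ T ∈ Finset.powersetCard k (Finset.univ : Finset (Fin n)),
            MvPolynomial.monomial (Ee L σ - mT T)
              (((Equiv.Perm.sign σ : ℤ) : ℚ) * ∏ i ∈ T, ((L (σ⁻¹ i)).1 : ℚ)))
          = ∑ S ∈ Finset.powersetCard k (Finset.univ : Finset (Fin n)),
              MvPolynomial.monomial (Ee L σ - mT (S.image ⇑σ))
                (((Equiv.Perm.sign σ : ℤ) : ℚ) * ∏ i ∈ S.image ⇑σ, ((L (σ⁻¹ i)).1 : ℚ)) := by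
      intro σ
      refine (Finset.sum_nbij' (fun S => S.image ⇑σ) (fun T => T.image ⇑σ.symm)
        ?_ ?_ ?_ ?_ ?_).symm
      · intro S hS
        rw [Finset.mem_powersetCard] at hS ⊢
        exact ⟨Finset.subset_univ _, by rw [Finset.card_image_of_injective _ σ.injective, hS.2]⟩
      · intro T hT
        rw [Finset.mem_powersetCard] at hT ⊢
        exact ⟨Finset.subset_univ _,
          by rw [Finset.card_image_of_injective _ σ.symm.injective, hT.2]⟩
      · intro S _
        simp [Finset.image_image]
      · intro T _
        simp [Finset.image_image]
      · intro S _
        rfl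
    rw [Finset.sum_congr rfl fun σ _ => h2 σ, Finset.sum_comm]
    refine Finset.sum_congr rfl fun S hS => ?_
    dsimp only
    rw [key]
    by_cases hpos : ∀ j ∈ S, 1 ≤ (L j).1
    · have hnn : ∀ j, 0 ≤ (ekMod n L S j).1 ∧ 0 ≤ (ekMod n L S j).2 := by
        intro j
        unfold ekMod
        split_ifs with h
        · have := hpos j h
          constructor <;> [omega; positivity]
        · constructor <;> positivity
      rw [deltaOfListZ, if_pos hnn]
      by_cases hinj : Function.Injective (ekMod n L S)
      · rw [if_pos hinj, Nat.cast_prod]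
      · rw [if_neg hinj, Nat.cast_zero, zero_smul]
        have hz : deltaOfList n
            (fun j => ((ekMod n L S j).1.toNat, (ekMod n L S j).2.toNat)) = 0 := by
          apply delta_zero_of_not_inj
          rw [Function.not_injective_iff] at hinj ⊢
          obtain ⟨a, b, hab, hne⟩ := hinj
          exact ⟨a, b, by rw [hab], hne⟩
        rw [hz, smul_zero]
    · push_neg at hpos
      obtain ⟨j0, hj0S, hj0⟩ := hpos
      have hz : ((L j0).1 : ℚ) = 0 := by
        have : (L j0).1 = 0 := by omega
        rw [this, Nat.cast_zero]
      rw [Finset.prod_eq_zero hj0S hz, zero_smul]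
      have hε : (if Function.Injective (ekMod n L S) then ∏ j ∈ S, (L j).1 else 0) = 0 := by
        split_ifs
        · exact Finset.prod_eq_zero hj0S (by omega)
        · rfl
      rw [hε, Nat.cast_zero, zero_smul]
  · intro S hS h
    dsimp only
    rcases h with ⟨j, hjS, hj⟩ | h
    · split_ifs
      · exact Finset.prod_eq_zero hjS hj
      · rfl
    · rw [if_neg h]
end

section
/- Let μ = (3,2), a partition of 5, so that removing 3 cells leaves diagrams with n = 2 cells and polynomials in ℚ[x₁,x₂,y₁,y₂]. Then Δ_{μ/{(0,0),(1,0),(0,2)}} does not belong to the subspace M_{μ/{(0,0),(1,0),(0,1)}} + M_{μ/{(0,0),(0,1),(0,2)}}. -/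
open MvPolynomial

namespace Statement5Aux

noncomputable section
open MvPolynomial Finsupp

abbrev σ2 := Fin 2 ⊕ Fin 2
abbrev vx1 : σ2 := Sum.inl 0
abbrev vx2 : σ2 := Sum.inl 1
abbrev vy1 : σ2 := Sum.inr 0
abbrev vy2 : σ2 := Sum.inr 1

def eA1 : σ2 →₀ ℕ := single vx1 1 + single vy1 1 + single vy2 2
def eA2 : σ2 →₀ ℕ := single vx2 1 + single vy1 2 + single vy2 1
def eB1 : σ2 →₀ ℕ := single vx1 1 + single vx2 1 + single vy2 1
def eB2 : σ2 →₀ ℕ := single vx1 1 + single vx2 1 + single vy1 1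
def eT1 : σ2 →₀ ℕ := single vx2 1 + single vy1 1 + single vy2 1
def eT2 : σ2 →₀ ℕ := single vx1 1 + single vy1 1 + single vy2 1
def eS2 : σ2 →₀ ℕ := single vx1 1 + single vy2 2

lemma finsupp_eq_iff (f g : σ2 →₀ ℕ) :
    f = g ↔ (f vx1 = g vx1 ∧ f vx2 = g vx2 ∧ f vy1 = g vy1 ∧ f vy2 = g vy2) := by
  constructor
  · rintro rfl; exact ⟨rfl, rfl, rfl, rfl⟩
  · rintro ⟨h1, h2, h3, h4⟩
    ext v
    rcases v with i | i <;> fin_cases i <;> assumption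

-- test values
example : eA1 vx1 = 1 ∧ eA1 vx2 = 0 ∧ eA1 vy1 = 1 ∧ eA1 vy2 = 2 := by
  refine ⟨?_, ?_, ?_, ?_⟩ <;> simp [eA1, single_apply]

lemma support_bin (a b : σ2 →₀ ℕ) (h : a ≠ b) :
    (monomial a (1:ℚ) - monomial b 1).support = {a, b} := by
  ext d
  simp only [MvPolynomial.mem_support_iff, MvPolynomial.coeff_sub, coeff_monomial,
    Finset.mem_insert, Finset.mem_singleton]
  rcases eq_or_ne d a with rfl | ha <;> rcases eq_or_ne d b with rfl | hb <;>
    simp_all [eq_comm]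

lemma coeff_bin (a b d : σ2 →₀ ℕ) :
    (monomial a (1:ℚ) - monomial b 1).coeff d =
      (if a = d then (1:ℚ) else 0) - (if b = d then 1 else 0) := by
  simp [MvPolynomial.coeff_sub, coeff_monomial]

lemma prod_desc (a m : σ2 →₀ ℕ) :
    (∏ v ∈ m.support, ((a v).descFactorial (m v) : ℚ)) =
      ((a vx1).descFactorial (m vx1) : ℚ) * ((a vx2).descFactorial (m vx2)) *
        ((a vy1).descFactorial (m vy1)) * ((a vy2).descFactorial (m vy2)) := by
  rw [show (∏ v ∈ m.support, ((a v).descFactorial (m v) : ℚ)) =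
      ∏ v : σ2, ((a v).descFactorial (m v) : ℚ) from
    Finset.prod_subset (Finset.subset_univ _) (by
      intro v _ hv
      simp [Finsupp.notMem_support_iff.mp hv])]
  rw [Fintype.prod_sum_type]
  simp [Fin.prod_univ_two]
  ring

lemma monDiff_bin (m a b : σ2 →₀ ℕ) (h : a ≠ b) :
    monDiff m (monomial a (1:ℚ) - monomial b 1) =
      monomial (a - m) (∏ v ∈ m.support, ((a v).descFactorial (m v) : ℚ))
      - monomial (b - m) (∏ v ∈ m.support, ((b v).descFactorial (m v) : ℚ)) := by
  rw [monDiff, support_bin a b h, Finset.sum_insert (by simpa using h),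
    Finset.sum_singleton, coeff_bin, coeff_bin]
  simp [h, h.symm, sub_eq_add_neg]


lemma sort2 (p q : ℕ×ℕ) (h : plexLT p q) :
    (({p, q} : Finset (ℕ×ℕ)).sort plexLE) = [p, q] := by
  have hne : p ≠ q := by
    rintro rfl; unfold plexLT at h; omega
  rw [show ({p, q} : Finset (ℕ×ℕ)) = insert p {q} from rfl,
    Finset.sort_insert plexLE (by
      intro b hb
      simp only [Finset.mem_singleton] at hb
      subst hb
      unfold plexLT at h; unfold plexLE; omega) (by simpa using hne),
    Finset.sort_singleton]

lemma deltaA : deltaOfFinset 2 ({(1,1),(0,2)} : Finset (ℕ×ℕ)) =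
    monomial eA1 1 - monomial eA2 1 := by
  rw [deltaOfFinset, dif_pos (by decide), deltaOfList, Matrix.det_fin_two]
  simp only [List.get_of_eq (sort2 (1,1) (0,2) (by unfold plexLT; omega))]
  norm_num [X_pow_eq_monomial, monomial_mul, eA1, eA2]
  first | abel | (congr 1 <;> congr 1 <;> abel)

lemma deltaB : deltaOfFinset 2 ({(1,0),(1,1)} : Finset (ℕ×ℕ)) =
    monomial eB1 1 - monomial eB2 1 := by
  rw [deltaOfFinset, dif_pos (by decide), deltaOfList, Matrix.det_fin_two]
  simp only [List.get_of_eq (sort2 (1,0) (1,1) (by unfold plexLT; omega))]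
  norm_num [X_pow_eq_monomial, monomial_mul, eB1, eB2]
  first | abel | (congr 1 <;> congr 1 <;> abel)

lemma deltaT : deltaOfFinset 2 ({(0,1),(1,1)} : Finset (ℕ×ℕ)) =
    monomial eT1 1 - monomial eT2 1 := by
  rw [deltaOfFinset, dif_pos (by decide), deltaOfList, Matrix.det_fin_two]
  simp only [List.get_of_eq (sort2 (0,1) (1,1) (by unfold plexLT; omega))]
  norm_num [X_pow_eq_monomial, monomial_mul, eT1, eT2]
  first | abel | (congr 1 <;> congr 1 <;> abel)


def phi : MvPolynomial σ2 ℚ →ₗ[ℚ] ℚ :=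
  MvPolynomial.lcoeff ℚ eT1 + (2:ℚ) • MvPolynomial.lcoeff ℚ eS2

lemma phi_monomial (c : σ2 →₀ ℕ) (q : ℚ) :
    phi (monomial c q) = (if c = eT1 then q else 0) + 2 * (if c = eS2 then q else 0) := by
  simp [phi, lcoeff_apply, coeff_monomial]

lemma neA : eA1 ≠ eA2 := by
  rw [Ne, finsupp_eq_iff]; simp [eA1, eA2, single_apply]

lemma neB : eB1 ≠ eB2 := by
  rw [Ne, finsupp_eq_iff]; simp [eB1, eB2, single_apply]

lemma neT : eT1 ≠ eT2 := by
  rw [Ne, finsupp_eq_iff]; simp [eT1, eT2, single_apply]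

lemma vanishA (m : σ2 →₀ ℕ) :
    phi (monDiff m (monomial eA1 1 - monomial eA2 1)) = 0 := by
  rw [monDiff_bin _ _ _ neA, map_sub, phi_monomial, phi_monomial, prod_desc, prod_desc]
  simp only [finsupp_eq_iff, tsub_apply]
  simp [eA1, eA2, eT1, eS2, single_apply]
  have hd : ∀ a k : ℕ, a < k → (Nat.descFactorial a k : ℚ) = 0 := fun a k h => by
    rw [Nat.descFactorial_eq_zero_iff_lt.2 h]; norm_num
  split_ifs with h1 h2 h2
  · have e1 : m vx1 = 0 := by omega
    have e2 : m vx2 = 0 := by omega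
    have e3 : m vy1 = 1 := by omega
    have e4 : m vy2 = 0 := by omega
    rw [e1, e2, e3, e4]
    norm_num [Nat.descFactorial]
  · have hor : 0 < m vx2 ∨ 1 < m vy1 := by omega
    rcases hor with h | h
    · rw [hd 0 _ h]; ring
    · rw [hd 1 _ h]; ring
  · have h : 0 < m vx1 := by omega
    rw [hd 0 _ h]; ring
  · ring


lemma vanishB (m : σ2 →₀ ℕ) :
    phi (monDiff m (monomial eB1 1 - monomial eB2 1)) = 0 := by
  rw [monDiff_bin _ _ _ neB, map_sub, phi_monomial, phi_monomial, prod_desc, prod_desc]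
  simp only [finsupp_eq_iff, tsub_apply]
  simp [eB1, eB2, eT1, eS2, single_apply]
  omega

lemma phiT : phi (monomial eT1 1 - monomial eT2 1) = 1 := by
  rw [map_sub, phi_monomial, phi_monomial, if_pos rfl]
  have h1 : eT1 ≠ eS2 := by rw [Ne, finsupp_eq_iff]; simp [eT1, eS2, single_apply]
  have h2 : eT2 ≠ eT1 := by rw [Ne, finsupp_eq_iff]; simp [eT1, eT2, single_apply]
  have h3 : eT2 ≠ eS2 := by rw [Ne, finsupp_eq_iff]; simp [eT2, eS2, single_apply]
  rw [if_neg h1, if_neg h2, if_neg h3]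
  norm_num

end
end Statement5Aux

/-- The counterexample after Remark 3: for `μ = (3,2)` (a partition of 5, so `n = 2`),
`Δ_{μ/{(0,0),(1,0),(0,2)}}` is not in `M_{μ/{(0,0),(1,0),(0,1)}} + M_{μ/{(0,0),(0,1),(0,2)}}`. -/
theorem statement5 :
    deltaOfFinset 2
        (({(0, 0), (0, 1), (0, 2), (1, 0), (1, 1)} : Finset (ℕ × ℕ))
          \ {(0, 0), (1, 0), (0, 2)})
      ∉ derivSpan (deltaOfFinset 2
            (({(0, 0), (0, 1), (0, 2), (1, 0), (1, 1)} : Finset (ℕ × ℕ))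
              \ {(0, 0), (1, 0), (0, 1)}))
        ⊔ derivSpan (deltaOfFinset 2
            (({(0, 0), (0, 1), (0, 2), (1, 0), (1, 1)} : Finset (ℕ × ℕ))
              \ {(0, 0), (0, 1), (0, 2)})) := by
  open Statement5Aux in
  have hT : (({(0, 0), (0, 1), (0, 2), (1, 0), (1, 1)} : Finset (ℕ × ℕ))
      \ {(0, 0), (1, 0), (0, 2)}) = {(0,1),(1,1)} := by decide
  have hA : (({(0, 0), (0, 1), (0, 2), (1, 0), (1, 1)} : Finset (ℕ × ℕ))
      \ {(0, 0), (1, 0), (0, 1)}) = {(1,1),(0,2)} := by decide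
  have hB : (({(0, 0), (0, 1), (0, 2), (1, 0), (1, 1)} : Finset (ℕ × ℕ))
      \ {(0, 0), (0, 1), (0, 2)}) = {(1,0),(1,1)} := by decide
  rw [hT, hA, hB, Statement5Aux.deltaA, Statement5Aux.deltaB, Statement5Aux.deltaT]
  intro hmem
  have key : derivSpan (MvPolynomial.monomial Statement5Aux.eA1 (1:ℚ)
        - MvPolynomial.monomial Statement5Aux.eA2 1)
      ⊔ derivSpan (MvPolynomial.monomial Statement5Aux.eB1 (1:ℚ)
        - MvPolynomial.monomial Statement5Aux.eB2 1)
      ≤ LinearMap.ker Statement5Aux.phi := by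
    apply sup_le <;> rw [derivSpan] <;> apply Submodule.span_le.2 <;>
      rintro R ⟨m, rfl⟩
    · exact Statement5Aux.vanishA m
    · exact Statement5Aux.vanishB m
  have h0 := key hmem
  rw [LinearMap.mem_ker, Statement5Aux.phiT] at h0
  exact one_ne_zero h0
end
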